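/- For every x > 0, ψ₂(x)·ψ₄(x) > ψ₃(x)². Consequently, writing ψ₁⁻¹ : (0,∞) → (0,∞) for the inverse of the strictly decreasing bijection ψ₁ : (0,∞) → (0,∞), the composition ψ₂ ∘ ψ₁⁻¹ is strictly concave on (0,∞). -/

import Mathlib

open Real Filter Set Topology

/-- The polygamma function `ψₙ`: the `(n+1)`-st derivative of `log ∘ Γ`. -/
noncomputable def polygamma (n : ℕ) (x : ℝ) : ℝ :=
  iteratedDeriv (n + 1) (fun y => Real.log (Real.Gamma y)) x

namespace PG


noncomputable def psum (p : ℕ) (x : ℝ) : ℝ := ∑' k : ℕ, ((x + k) ^ p)⁻¹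

lemma base_pos {x : ℝ} (hx : 0 < x) (k : ℕ) : 0 < x + k := by positivity

lemma term_pos {p : ℕ} {x : ℝ} (hx : 0 < x) (k : ℕ) : 0 < ((x + k) ^ p)⁻¹ := by
  have := base_pos hx k; positivity

lemma term_anti {p : ℕ} {a x : ℝ} (ha : 0 < a) (hax : a ≤ x) (k : ℕ) :
    ((x + k) ^ p)⁻¹ ≤ ((a + k) ^ p)⁻¹ := by
  have h1 := base_pos ha k
  have h2 : a + k ≤ x + k := by linarith
  exact inv_anti₀ (pow_pos h1 p) (pow_le_pow_left₀ h1.le h2 p)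

lemma summable_psum {p : ℕ} (hp : 2 ≤ p) {x : ℝ} (hx : 0 < x) :
    Summable (fun k : ℕ => ((x + k) ^ p)⁻¹) := by
  rw [← summable_nat_add_iff 1]
  have hs : Summable (fun k : ℕ => ((k + 1 : ℝ) ^ 2)⁻¹) := by
    have := (Real.summable_one_div_nat_pow (p := 2)).mpr (by norm_num)
    simpa [one_div] using (summable_nat_add_iff 1).mpr this
  refine hs.of_nonneg_of_le (fun k => (term_pos hx _).le) (fun k => ?_)
  have hk1 : (1 : ℝ) ≤ (k : ℝ) + 1 := by linarith [Nat.cast_nonneg (α := ℝ) k]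
  have h2 : ((k : ℝ) + 1) ^ 2 ≤ (x + (k + 1 : ℕ)) ^ p := by
    calc ((k : ℝ) + 1) ^ 2 ≤ ((k : ℝ) + 1) ^ p := pow_le_pow_right₀ hk1 hp
    _ ≤ (x + (k + 1 : ℕ)) ^ p := by
        push_cast
        exact pow_le_pow_left₀ (by linarith) (by linarith) p
  exact inv_anti₀ (by positivity) h2

lemma psum_pos {p : ℕ} (hp : 2 ≤ p) {x : ℝ} (hx : 0 < x) : 0 < psum p x :=
  Summable.tsum_pos (summable_psum hp hx) (fun k => (term_pos hx k).le) 0 (term_pos hx 0)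


lemma psum_def (p : ℕ) (x : ℝ) : psum p x = ∑' k : ℕ, ((x + k) ^ p)⁻¹ := rfl


lemma tlu_aux {F : ℕ → ℝ → ℝ} {G : ℝ → ℝ}
    (h : ∀ a b : ℝ, 0 < a → TendstoUniformlyOn F G atTop (Icc a b)) :
    TendstoLocallyUniformlyOn F G atTop (Ioi 0) := by
  rw [tendstoLocallyUniformlyOn_iff_forall_isCompact isOpen_Ioi]
  intro K hK hKc
  rcases K.eq_empty_or_nonempty with h0 | h0
  · rw [h0]; exact tendstoUniformlyOn_empty
  · have haK : sInf K ∈ K := hKc.sInf_mem h0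
    have ha : (0:ℝ) < sInf K := hK haK
    refine (h (sInf K) (sSup K) ha).mono fun y hy => ?_
    exact ⟨csInf_le hKc.bddBelow hy, le_csSup hKc.bddAbove hy⟩

lemma tuo_succ {F : ℕ → ℝ → ℝ} {G : ℝ → ℝ} {s : Set ℝ}
    (h : TendstoUniformlyOn F G atTop s) :
    TendstoUniformlyOn (fun N => F (N + 1)) G atTop s :=
  fun u hu => (tendsto_add_atTop_nat 1).eventually (h u hu)

lemma hasDerivAt_term {p : ℕ} (hp : 2 ≤ p) {y : ℝ} (hy : 0 < y) (k : ℕ) :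
    HasDerivAt (fun y : ℝ => ((y + k) ^ p)⁻¹) (-(p : ℝ) * ((y + k) ^ (p + 1))⁻¹) y := by
  have hb := base_pos hy k
  have h1 : HasDerivAt (fun y : ℝ => (y + k) ^ p) ((p : ℝ) * (y + k) ^ (p - 1) * 1) y :=
    ((hasDerivAt_id y).add_const _).pow p
  have h2 := h1.inv (by positivity)
  refine h2.congr_deriv (Eq.symm ?_)
  have hpow : ((y + (k:ℝ)) ^ p) ^ 2 = (y + k) ^ (p - 1) * (y + k) ^ (p + 1) := by
    rw [← pow_mul, ← pow_add]; congr 1; omega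
  rw [hpow]
  have hne1 : (y + (k:ℝ)) ^ (p - 1) ≠ 0 := by positivity
  have hne2 : (y + (k:ℝ)) ^ (p + 1) ≠ 0 := by positivity
  field_simp

lemma hasDerivAt_psum {p : ℕ} (hp : 2 ≤ p) {x : ℝ} (hx : 0 < x) :
    HasDerivAt (psum p) (-(p : ℝ) * psum (p + 1) x) x := by
  have key : HasDerivAt (psum p) (∑' k : ℕ, -(p : ℝ) * ((x + k) ^ (p + 1))⁻¹) x := by
    apply hasDerivAt_of_tendstoLocallyUniformlyOn isOpen_Ioi
      (f := fun N (y : ℝ) => ∑ k ∈ Finset.range N, ((y + k) ^ p)⁻¹)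
      (f' := fun N (y : ℝ) => ∑ k ∈ Finset.range N, -(p : ℝ) * ((y + k) ^ (p + 1))⁻¹)
      (hx := mem_Ioi.2 hx) (l := atTop)
    · apply tlu_aux
      intro a b ha
      have hsum : Summable (fun k : ℕ => (p : ℝ) * ((a + k) ^ (p + 1))⁻¹) :=
        (summable_psum (by omega) ha).mul_left _
      apply tendstoUniformlyOn_tsum_nat hsum
      intro k y hy
      rw [norm_mul, norm_neg, Real.norm_natCast, Real.norm_eq_abs,
        abs_of_pos (term_pos (lt_of_lt_of_le ha hy.1) k)]
      exact mul_le_mul_of_nonneg_left (term_anti ha hy.1 k) (Nat.cast_nonneg p)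
    · refine Eventually.of_forall fun N y hy => HasDerivAt.fun_sum fun k _ => ?_
      exact hasDerivAt_term hp hy k
    · intro y hy
      rw [psum_def]
      exact (summable_psum hp hy).hasSum.tendsto_sum_nat
  rw [tsum_mul_left] at key
  rw [psum_def]
  exact key




noncomputable def sterm (x : ℝ) (k : ℕ) : ℝ := ((1 : ℝ) + k)⁻¹ - (x + k)⁻¹

lemma sterm_bound {m C y : ℝ} (hm : 0 < m) (hm1 : m ≤ 1) (hmy : m ≤ y) (hC : |y - 1| ≤ C)
    (k : ℕ) : |sterm y k| ≤ C * ((m + k) ^ 2)⁻¹ := by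
  have hk : (0:ℝ) ≤ k := Nat.cast_nonneg k
  have h1 : (0:ℝ) < 1 + k := by linarith
  have hy : (0:ℝ) < y + k := by linarith
  have hmk : (0:ℝ) < m + k := by linarith
  have heq : sterm y k = (y - 1) * ((1 + k) * (y + k))⁻¹ := by
    unfold sterm; field_simp; ring
  rw [heq, abs_mul, abs_of_pos (by positivity : (0:ℝ) < ((1 + (k:ℝ)) * (y + k))⁻¹)]
  have h2 : ((m + (k:ℝ)) ^ 2)⁻¹ = ((m + k) * (m + k))⁻¹ := by rw [sq]
  rw [h2]
  apply mul_le_mul hC _ (by positivity) (le_trans (abs_nonneg _) hC)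
  apply inv_anti₀ (by positivity)
  apply mul_le_mul (by linarith) (by linarith) (by linarith) (by linarith)

lemma summable_sterm {x : ℝ} (hx : 0 < x) : Summable (fun k : ℕ => sterm x k) := by
  set m := min x 1 with hm
  have hm0 : 0 < m := lt_min hx one_pos
  apply Summable.of_abs
  refine ((summable_psum le_rfl hm0).mul_left |x - 1|).of_nonneg_of_le
    (fun k => abs_nonneg _) (fun k => ?_)
  exact sterm_bound hm0 (min_le_right _ _) (min_le_left _ _) le_rfl k

noncomputable def cseq (N : ℕ) : ℝ := Real.log N - (harmonic (N + 1) : ℝ)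

lemma tendsto_cseq : Tendsto cseq atTop (𝓝 (-eulerMascheroniConstant)) := by
  have h1 : Tendsto (fun N : ℕ => ((harmonic (N + 1) : ℝ) - Real.log (N + 1)))
      atTop (𝓝 eulerMascheroniConstant) := by
    have h := Real.tendsto_harmonic_sub_log.comp (tendsto_add_atTop_nat 1)
    exact h.congr fun N => by simp only [Function.comp_apply]; push_cast; ring
  have h2 : Tendsto (fun N : ℕ => Real.log (N + 1) - Real.log N) atTop (𝓝 0) := by
    have ha : Tendsto (fun N : ℕ => (1 : ℝ) + 1 / N) atTop (𝓝 1) := by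
      simpa using tendsto_const_nhds.add (tendsto_one_div_atTop_nhds_zero_nat (𝕜 := ℝ))
    have hb : Tendsto (fun N : ℕ => Real.log (1 + 1 / N)) atTop (𝓝 0) := by
      have := (Real.continuousAt_log one_ne_zero).tendsto.comp ha
      simpa [Function.comp_def] using this
    apply hb.congr'
    filter_upwards [eventually_ge_atTop 1] with N hN
    have hN0 : (0:ℝ) < N := by exact_mod_cast hN
    rw [← Real.log_div (by positivity) (ne_of_gt hN0)]
    congr 1
    field_simp
  have : Tendsto (fun N : ℕ => -((harmonic (N + 1) : ℝ) - Real.log (N + 1))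
      - (Real.log (N + 1) - Real.log N)) atTop (𝓝 (-eulerMascheroniConstant - 0)) :=
    (h1.neg).sub h2
  rw [sub_zero] at this
  apply this.congr
  intro N
  unfold cseq
  ring

noncomputable def dig (x : ℝ) : ℝ := -eulerMascheroniConstant + ∑' k : ℕ, sterm x k

lemma harmonic_cast (N : ℕ) : (harmonic N : ℝ) = ∑ k ∈ Finset.range N, ((1 : ℝ) + k)⁻¹ := by
  unfold harmonic
  push_cast
  apply Finset.sum_congr rfl
  intro k _
  rw [add_comm]

lemma hasDerivAt_L {x : ℝ} (hx : 0 < x) :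
    HasDerivAt (fun y => Real.log (Real.Gamma y)) (dig x) x := by
  apply hasDerivAt_of_tendstoLocallyUniformlyOn isOpen_Ioi (l := atTop)
    (f := fun N (y : ℝ) => Real.BohrMollerup.logGammaSeq y N)
    (f' := fun N (y : ℝ) => cseq N + ∑ k ∈ Finset.range (N + 1), sterm y k)
    (hx := mem_Ioi.2 hx)
  · apply tlu_aux
    intro a b ha
    have hconst : TendstoUniformlyOn (fun N (_ : ℝ) => cseq N)
        (fun _ => -eulerMascheroniConstant) atTop (Icc a b) := by
      rw [Metric.tendstoUniformlyOn_iff]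
      intro ε hε
      filter_upwards [Metric.tendsto_nhds.mp tendsto_cseq ε hε] with N hN y _
      simpa [dist_comm] using hN
    have hser : TendstoUniformlyOn (fun N (y : ℝ) => ∑ k ∈ Finset.range (N + 1), sterm y k)
        (fun y => ∑' k, sterm y k) atTop (Icc a b) := by
      apply tuo_succ (F := fun N (y : ℝ) => ∑ k ∈ Finset.range N, sterm y k)
      set m := min a 1 with hm
      have hm0 : 0 < m := lt_min ha one_pos
      apply tendstoUniformlyOn_tsum_nat
        (u := fun k => (b + 1) * ((m + k) ^ 2)⁻¹)
        ((summable_psum le_rfl hm0).mul_left _)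
      intro k y hy
      rw [Real.norm_eq_abs]
      apply sterm_bound hm0 (min_le_right _ _) (le_trans (min_le_left _ _) hy.1)
      rw [abs_le]
      constructor
      · have := hy.1; have := ha; nlinarith [hy.2]
      · nlinarith [hy.2, hy.1, ha]
    exact hconst.add hser
  · refine Eventually.of_forall fun N y hy => ?_
    have hder : HasDerivAt (fun y : ℝ => Real.BohrMollerup.logGammaSeq y N)
        (Real.log N - ∑ m ∈ Finset.range (N + 1), (y + m)⁻¹) y := by
      have h1 : HasDerivAt (fun y : ℝ => y * Real.log N + (Real.log (Nat.factorial N)))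
          (Real.log N) y := by
        simpa using ((hasDerivAt_id y).mul_const (Real.log N)).add_const ((Real.log (Nat.factorial N)))
      have h2 : HasDerivAt (fun y : ℝ => ∑ m ∈ Finset.range (N + 1), Real.log (y + m))
          (∑ m ∈ Finset.range (N + 1), (y + m)⁻¹) y := by
        apply HasDerivAt.fun_sum
        intro m _
        have := ((hasDerivAt_id y).add_const (m : ℝ)).log (ne_of_gt (base_pos hy m))
        simpa [one_div] using this
      have := h1.sub h2
      simpa [Real.BohrMollerup.logGammaSeq, sub_eq_add_neg, add_assoc, Pi.add_def, Pi.neg_def] using this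
    refine hder.congr_deriv (Eq.symm ?_)
    show cseq N + ∑ k ∈ Finset.range (N + 1), sterm y k = _
    unfold cseq sterm
    rw [Finset.sum_sub_distrib (f := fun k : ℕ => ((1:ℝ) + k)⁻¹) (g := fun k : ℕ => (y + k)⁻¹),
      harmonic_cast]
    ring
  · intro y hy
    exact Real.BohrMollerup.tendsto_log_gamma hy

lemma hasDerivAt_dig {x : ℝ} (hx : 0 < x) : HasDerivAt dig (psum 2 x) x := by
  have key : HasDerivAt dig (∑' k : ℕ, ((x + k) ^ 2)⁻¹) x := by
    apply hasDerivAt_of_tendstoLocallyUniformlyOn isOpen_Ioi (l := atTop)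
      (f := fun N (y : ℝ) => cseq N + ∑ k ∈ Finset.range (N + 1), sterm y k)
      (f' := fun N (y : ℝ) => ∑ k ∈ Finset.range (N + 1), ((y + k) ^ 2)⁻¹)
      (g' := fun y : ℝ => ∑' k : ℕ, ((y + k) ^ 2)⁻¹)
      (hx := mem_Ioi.2 hx)
    · apply tlu_aux
      intro a b ha
      apply tuo_succ (F := fun N (y : ℝ) => ∑ k ∈ Finset.range N, ((y + k) ^ 2)⁻¹)
      apply tendstoUniformlyOn_tsum_nat (u := fun k => ((a + k) ^ 2)⁻¹)
        (summable_psum le_rfl ha)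
      intro k y hy
      rw [Real.norm_eq_abs, abs_of_pos (term_pos (lt_of_lt_of_le ha hy.1) k)]
      exact term_anti ha hy.1 k
    · refine Eventually.of_forall fun N y hy => ?_
      apply HasDerivAt.const_add
      apply HasDerivAt.fun_sum
      intro k _
      have h1 : HasDerivAt (fun y : ℝ => (y + k)⁻¹) (-1 / (y + k) ^ 2) y := by
        simpa [Pi.inv_def] using ((hasDerivAt_id y).add_const (k : ℝ)).inv (ne_of_gt (base_pos hy k))
      have := h1.const_sub (((1 : ℝ) + k)⁻¹)
      refine this.congr_deriv (Eq.symm ?_)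
      field_simp
    · intro y hy
      have h1 : Tendsto (fun N => ∑ k ∈ Finset.range (N + 1), sterm y k) atTop
          (𝓝 (∑' k, sterm y k)) :=
        (summable_sterm hy).hasSum.tendsto_sum_nat.comp (tendsto_add_atTop_nat 1)
      have h2 := (tendsto_cseq.add h1)
      simpa [dig] using h2
  rw [psum_def]
  exact key




lemma polygamma_succ (n : ℕ) : polygamma (n + 1) = deriv (polygamma n) := by
  funext x
  show iteratedDeriv (n + 1 + 1) _ x = _
  rw [iteratedDeriv_succ]
  rfl

lemma pg0_eq {x : ℝ} (hx : 0 < x) : polygamma 0 x = dig x := by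
  show iteratedDeriv (0 + 1) _ x = _
  rw [iteratedDeriv_one]
  exact (hasDerivAt_L hx).deriv

lemma pg1_eq {x : ℝ} (hx : 0 < x) : polygamma 1 x = psum 2 x := by
  rw [show (1 : ℕ) = 0 + 1 from rfl, polygamma_succ]
  have hev : polygamma 0 =ᶠ[𝓝 x] dig := by
    filter_upwards [isOpen_Ioi.mem_nhds (mem_Ioi.2 hx)] with y hy using pg0_eq hy
  rw [hev.deriv_eq]
  exact (hasDerivAt_dig hx).deriv

lemma pg2_eq {x : ℝ} (hx : 0 < x) : polygamma 2 x = -2 * psum 3 x := by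
  rw [show (2 : ℕ) = 1 + 1 from rfl, polygamma_succ]
  have hev : polygamma 1 =ᶠ[𝓝 x] psum 2 := by
    filter_upwards [isOpen_Ioi.mem_nhds (mem_Ioi.2 hx)] with y hy using pg1_eq hy
  rw [hev.deriv_eq, (hasDerivAt_psum le_rfl hx).deriv]
  norm_num

lemma pg3_eq {x : ℝ} (hx : 0 < x) : polygamma 3 x = 6 * psum 4 x := by
  rw [show (3 : ℕ) = 2 + 1 from rfl, polygamma_succ]
  have hev : polygamma 2 =ᶠ[𝓝 x] (fun y => -2 * psum 3 y) := by
    filter_upwards [isOpen_Ioi.mem_nhds (mem_Ioi.2 hx)] with y hy using pg2_eq hy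
  rw [hev.deriv_eq, ((hasDerivAt_psum (by norm_num) hx).const_mul (-2 : ℝ)).deriv]
  norm_num
  ring

lemma pg4_eq {x : ℝ} (hx : 0 < x) : polygamma 4 x = -24 * psum 5 x := by
  rw [show (4 : ℕ) = 3 + 1 from rfl, polygamma_succ]
  have hev : polygamma 3 =ᶠ[𝓝 x] (fun y => 6 * psum 4 y) := by
    filter_upwards [isOpen_Ioi.mem_nhds (mem_Ioi.2 hx)] with y hy using pg3_eq hy
  rw [hev.deriv_eq, ((hasDerivAt_psum (by norm_num) hx).const_mul (6 : ℝ)).deriv]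
  norm_num
  ring

lemma hasDerivAt_pg1 {x : ℝ} (hx : 0 < x) :
    HasDerivAt (polygamma 1) (polygamma 2 x) x := by
  have hev : polygamma 1 =ᶠ[𝓝 x] psum 2 := by
    filter_upwards [isOpen_Ioi.mem_nhds (mem_Ioi.2 hx)] with y hy using pg1_eq hy
  rw [pg2_eq hx]
  refine HasDerivAt.congr_of_eventuallyEq ?_ hev
  have := hasDerivAt_psum le_rfl hx
  norm_num at this ⊢
  exact this

lemma hasDerivAt_pg2 {x : ℝ} (hx : 0 < x) :
    HasDerivAt (polygamma 2) (polygamma 3 x) x := by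
  have hev : polygamma 2 =ᶠ[𝓝 x] (fun y => -2 * psum 3 y) := by
    filter_upwards [isOpen_Ioi.mem_nhds (mem_Ioi.2 hx)] with y hy using pg2_eq hy
  rw [pg3_eq hx]
  refine HasDerivAt.congr_of_eventuallyEq ?_ hev
  have := (hasDerivAt_psum (p := 3) (by norm_num) hx).const_mul (-2 : ℝ)
  refine this.congr_deriv (Eq.symm ?_)
  push_cast
  ring

lemma hasDerivAt_pg3 {x : ℝ} (hx : 0 < x) :
    HasDerivAt (polygamma 3) (polygamma 4 x) x := by
  have hev : polygamma 3 =ᶠ[𝓝 x] (fun y => 6 * psum 4 y) := by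
    filter_upwards [isOpen_Ioi.mem_nhds (mem_Ioi.2 hx)] with y hy using pg3_eq hy
  rw [pg4_eq hx]
  refine HasDerivAt.congr_of_eventuallyEq ?_ hev
  have := (hasDerivAt_psum (p := 4) (by norm_num) hx).const_mul (6 : ℝ)
  refine this.congr_deriv (Eq.symm ?_)
  push_cast
  ring

lemma cs {x : ℝ} (hx : 0 < x) : psum 4 x ^ 2 ≤ psum 3 x * psum 5 x := by
  have h3 := summable_psum (p := 3) (by norm_num) hx
  have h4 := summable_psum (p := 4) (by norm_num) hx
  have h5 := summable_psum (p := 5) (by norm_num) hx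
  have key : ∀ N : ℕ, (∑ k ∈ Finset.range N, ((x + k) ^ 4)⁻¹) ^ 2 ≤ psum 3 x * psum 5 x := by
    intro N
    calc (∑ k ∈ Finset.range N, ((x + k) ^ 4)⁻¹) ^ 2
        ≤ (∑ k ∈ Finset.range N, ((x + k) ^ 3)⁻¹) * ∑ k ∈ Finset.range N, ((x + k) ^ 5)⁻¹ := by
          apply Finset.sum_sq_le_sum_mul_sum_of_sq_eq_mul
          · exact fun k _ => (term_pos hx k).le
          · exact fun k _ => (term_pos hx k).le
          · intro k _
            rw [inv_pow, ← pow_mul, ← mul_inv, ← pow_add]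
      _ ≤ psum 3 x * psum 5 x := by
          rw [psum_def, psum_def]
          apply mul_le_mul (Summable.sum_le_tsum _ (fun k _ => (term_pos hx k).le) h3)
            (Summable.sum_le_tsum _ (fun k _ => (term_pos hx k).le) h5)
            (Finset.sum_nonneg fun k _ => (term_pos hx k).le)
            (tsum_nonneg fun k => (term_pos hx k).le)
  have htend : Tendsto (fun N => (∑ k ∈ Finset.range N, ((x + k) ^ 4)⁻¹) ^ 2) atTop
      (𝓝 (psum 4 x ^ 2)) := by
    rw [psum_def]
    exact h4.hasSum.tendsto_sum_nat.pow 2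
  exact le_of_tendsto htend (Eventually.of_forall key)

lemma main_ineq {x : ℝ} (hx : 0 < x) :
    polygamma 3 x ^ 2 < polygamma 2 x * polygamma 4 x := by
  rw [pg2_eq hx, pg3_eq hx, pg4_eq hx]
  have h3 := psum_pos (p := 3) (by norm_num) hx
  have h5 := psum_pos (p := 5) (by norm_num) hx
  have := cs hx
  nlinarith


lemma pg1_pos {x : ℝ} (hx : 0 < x) : 0 < polygamma 1 x := by
  rw [pg1_eq hx]; exact psum_pos le_rfl hx

lemma pg2_neg {x : ℝ} (hx : 0 < x) : polygamma 2 x < 0 := by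
  rw [pg2_eq hx]
  have := psum_pos (p := 3) (by norm_num) hx
  nlinarith

theorem part2 (g : ℝ → ℝ) (hmap : Set.MapsTo g (Set.Ioi 0) (Set.Ioi 0))
    (hinv : Set.InvOn g (polygamma 1) (Set.Ioi 0) (Set.Ioi 0)) :
    StrictConcaveOn ℝ (Set.Ioi 0) (fun y => polygamma 2 (g y)) := by
  have hψanti : StrictAntiOn (polygamma 1) (Ioi 0) := by
    apply strictAntiOn_of_deriv_neg (convex_Ioi 0)
      (fun y hy => (hasDerivAt_pg1 hy).continuousAt.continuousWithinAt)
    intro y hy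
    rw [interior_Ioi] at hy
    rw [(hasDerivAt_pg1 hy).deriv]
    exact pg2_neg hy
  have hganti : StrictAntiOn g (Ioi 0) := by
    intro y1 hy1 y2 hy2 h12
    rcases lt_trichotomy (g y2) (g y1) with h | h | h
    · exact h
    · exfalso
      have : y2 = y1 := by
        have e2 := hinv.2 hy2; have e1 := hinv.2 hy1
        rw [← e2, ← e1, h]
      exact absurd this (ne_of_gt h12)
    · exfalso
      have := hψanti (hmap hy1) (hmap hy2) h
      rw [hinv.2 hy1, hinv.2 hy2] at this
      exact absurd h12 (not_lt.2 this.le)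
  have himg : g '' (Ioi 0) = Ioi 0 := by
    apply Subset.antisymm (image_subset_iff.2 hmap)
    intro x hx
    exact ⟨polygamma 1 x, mem_Ioi.2 (pg1_pos hx), hinv.1 hx⟩
  have hgcont : ∀ y ∈ Ioi (0:ℝ), ContinuousAt g y := by
    intro y hy
    have hmono : StrictMonoOn (fun y => -(g y)) (Ioi 0) :=
      fun a ha b hb hab => neg_lt_neg (hganti ha hb hab)
    have hcont' : ContinuousAt (fun y => -(g y)) y := by
      apply hmono.continuousAt_of_image_mem_nhds (isOpen_Ioi.mem_nhds hy)
      have himg2 : (fun y => -(g y)) '' (Ioi 0) = Iio 0 := by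
        rw [show (fun y => -(g y)) = (fun t : ℝ => -t) ∘ g from rfl, image_comp, himg]
        ext t
        simp only [mem_image, mem_Ioi, mem_Iio]
        constructor
        · rintro ⟨s, hs, rfl⟩; linarith
        · intro ht; exact ⟨-t, by linarith, by ring⟩
      rw [himg2]
      exact isOpen_Iio.mem_nhds (by simpa using hmap hy)
    have := hcont'.neg
    simpa [Pi.neg_def] using this
  have hgderiv : ∀ y ∈ Ioi (0:ℝ), HasDerivAt g (polygamma 2 (g y))⁻¹ y := by
    intro y hy
    apply HasDerivAt.of_local_left_inverse (hgcont y hy) (hasDerivAt_pg1 (hmap hy))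
      (pg2_neg (hmap hy)).ne
    filter_upwards [isOpen_Ioi.mem_nhds hy] with z hz using hinv.2 hz
  have hhderiv : ∀ y ∈ Ioi (0:ℝ), HasDerivAt (fun z => polygamma 2 (g z))
      (polygamma 3 (g y) * (polygamma 2 (g y))⁻¹) y := by
    intro y hy
    exact (hasDerivAt_pg2 (hmap hy)).comp y (hgderiv y hy)
  have hq : ∀ y ∈ Ioi (0:ℝ), HasDerivAt
      (fun z => polygamma 3 (g z) * (polygamma 2 (g z))⁻¹)
      ((polygamma 4 (g y) * (polygamma 2 (g y))⁻¹) * (polygamma 2 (g y))⁻¹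
        + polygamma 3 (g y) *
          (-(polygamma 3 (g y) * (polygamma 2 (g y))⁻¹) / (polygamma 2 (g y)) ^ 2)) y := by
    intro y hy
    have hA : HasDerivAt (fun z => polygamma 3 (g z))
        (polygamma 4 (g y) * (polygamma 2 (g y))⁻¹) y :=
      (hasDerivAt_pg3 (hmap hy)).comp y (hgderiv y hy)
    have hB := (hhderiv y hy).inv (pg2_neg (hmap hy)).ne
    exact hA.mul hB
  apply strictConcaveOn_of_deriv2_neg (convex_Ioi 0)
    (fun y hy => (hhderiv y hy).continuousAt.continuousWithinAt)
  intro y hy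
  rw [interior_Ioi] at hy
  show deriv (deriv (fun z => polygamma 2 (g z))) y < 0
  have hev : deriv (fun z => polygamma 2 (g z)) =ᶠ[𝓝 y]
      (fun z => polygamma 3 (g z) * (polygamma 2 (g z))⁻¹) := by
    filter_upwards [isOpen_Ioi.mem_nhds hy] with z hz using (hhderiv z hz).deriv
  rw [hev.deriv_eq, (hq y hy).deriv]
  set u := polygamma 2 (g y) with hu_def
  set v := polygamma 3 (g y) with hv_def
  set w := polygamma 4 (g y) with hw_def
  have hu : u < 0 := pg2_neg (hmap hy)
  have hlt : v ^ 2 < u * w := main_ineq (hmap hy)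
  have hu2 : (0:ℝ) < u ^ 2 := by nlinarith
  have hexpr : w * u⁻¹ * u⁻¹ + v * (-(v * u⁻¹) / u ^ 2) = (u * w - v ^ 2) / u ^ 3 := by
    have hne : u ≠ 0 := hu.ne
    field_simp
    ring
  rw [hexpr]
  apply div_neg_of_pos_of_neg
  · nlinarith
  · nlinarith


end PG

/-- Lemma `psi-con`: for every `x > 0`, `ψ₂(x)·ψ₄(x) > ψ₃(x)²`; consequently, for any
function `g` that is the inverse on `(0,∞)` of the strictly decreasing bijection
`ψ₁ : (0,∞) → (0,∞)`, the composition `ψ₂ ∘ g` is strictly concave on `(0,∞)`. -/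
theorem polygamma_inequality_and_strict_concavity :
    (∀ x : ℝ, 0 < x → polygamma 3 x ^ 2 < polygamma 2 x * polygamma 4 x) ∧
    ∀ g : ℝ → ℝ, Set.MapsTo g (Set.Ioi 0) (Set.Ioi 0) →
      Set.InvOn g (polygamma 1) (Set.Ioi 0) (Set.Ioi 0) →
      StrictConcaveOn ℝ (Set.Ioi 0) (fun y => polygamma 2 (g y)) := by
  exact ⟨fun x hx => PG.main_ineq hx, fun g hmap hinv => PG.part2 g hmap hinv⟩
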